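/- Let T > 0 and p_R(r) = 2√(2/(πT)) ∑_{m=−∞}^{∞} (−1)^{m+1}(m − 1/2) exp(−(m − 1/2)² 2r²/T) for r > 0. Then p_R(r) ∼ 2√(2/(πT)) exp(−r²/(2T)) as r → +∞, and the integral ∫₀^{∞} r p_R(r) dr is finite. -/

import Mathlib

open Real MeasureTheory Filter

noncomputable section

namespace Stmt16Aux


lemma summable_of_poly_exp {c : ℝ} (hc : 0 < c) {g : ℕ → ℝ} {A : ℝ}
    (h : ∀ n : ℕ, ‖g n‖ ≤ A * ((2 * n + 3) * Real.exp (-(4 * c * n)))) :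
    Summable g := by
  set ρ : ℝ := Real.exp (-(4 * c)) with hρdef
  have hρ0 : 0 < ρ := Real.exp_pos _
  have hρ1 : ρ < 1 := Real.exp_lt_one_iff.mpr (by linarith)
  have hρn : ‖ρ‖ < 1 := by rw [Real.norm_eq_abs, abs_of_pos hρ0]; exact hρ1
  have h1 : Summable (fun n : ℕ => (n : ℝ) * ρ ^ n) := by
    simpa using summable_pow_mul_geometric_of_norm_lt_one 1 hρn
  have h2 : Summable (fun n : ℕ => ρ ^ n) := summable_geometric_of_lt_one hρ0.le hρ1
  have h3 : Summable (fun n : ℕ => A * ((2 * n + 3) * ρ ^ n)) := by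
    have := ((h1.mul_left 2).add (h2.mul_left 3)).mul_left A
    refine this.congr fun n => ?_
    ring
  refine Summable.of_norm_bounded h3 fun n => ?_
  have : Real.exp (-(4 * c * n)) = ρ ^ n := by
    rw [hρdef, ← Real.exp_nat_mul]
    ring_nf
  calc ‖g n‖ ≤ A * ((2 * n + 3) * Real.exp (-(4 * c * n))) := h n
    _ = A * ((2 * n + 3) * ρ ^ n) := by rw [this]

/-- the `k`-th term of the ℕ-indexed series. -/
noncomputable def term (c : ℝ) (k : ℕ) : ℝ :=
  (-1 : ℝ) ^ k * (2 * (k : ℝ) + 1) * Real.exp (-((2 * (k : ℝ) + 1) ^ 2 * c))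

lemma term_abs (c : ℝ) (k : ℕ) :
    ‖term c k‖ = (2 * (k : ℝ) + 1) * Real.exp (-((2 * (k : ℝ) + 1) ^ 2 * c)) := by
  have h1 : (0:ℝ) ≤ 2 * (k : ℝ) + 1 := by positivity
  rw [term, Real.norm_eq_abs, abs_mul, abs_mul, abs_pow, abs_neg, abs_one, one_pow, one_mul,
    abs_of_nonneg h1, abs_of_pos (Real.exp_pos _)]

lemma norm_term_le {c : ℝ} (hc : 0 < c) {j k : ℕ} (h1 : k ≤ j) (h2 : j ≤ 2 * k + 1) :
    ‖term c j‖ ≤ 3 * ((2 * (k:ℝ) + 3) * Real.exp (-(4 * c * k))) := by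
  rw [term_abs]
  have hk1 : (k : ℝ) ≤ j := by exact_mod_cast h1
  have hk2 : (j : ℝ) ≤ 2 * k + 1 := by exact_mod_cast h2
  have he : Real.exp (-((2 * (j : ℝ) + 1) ^ 2 * c)) ≤ Real.exp (-(4 * c * k)) := by
    apply Real.exp_le_exp.mpr
    nlinarith [sq_nonneg (2 * (j:ℝ) - 1), hc.le, (Nat.cast_nonneg k : (0:ℝ) ≤ k)]
  have hco : (2 * (j : ℝ) + 1) ≤ 3 * (2 * (k:ℝ) + 3) := by nlinarith
  have := mul_le_mul hco he (Real.exp_pos _).le (by positivity)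
  linarith [this]

lemma summable_term {c : ℝ} (hc : 0 < c) : Summable (term c) :=
  summable_of_poly_exp hc (fun n => norm_term_le hc le_rfl (by omega))

lemma summable_term_succ {c : ℝ} (hc : 0 < c) : Summable (fun n => term c (n + 1)) :=
  summable_of_poly_exp hc (fun n => norm_term_le hc (by omega) (by omega))

lemma summable_term_even {c : ℝ} (hc : 0 < c) : Summable (fun n => term c (2 * n)) :=
  summable_of_poly_exp hc (fun n => norm_term_le hc (by omega) (by omega))

lemma summable_term_odd {c : ℝ} (hc : 0 < c) : Summable (fun n => term c (2 * n + 1)) :=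
  summable_of_poly_exp hc (fun n => norm_term_le hc (by omega) (by omega))

/-- the sum. -/
noncomputable def G (c : ℝ) : ℝ := ∑' k : ℕ, term c k



lemma term_zero (c : ℝ) : term c 0 = Real.exp (-c) := by
  simp [term]

section IntSum
variable {c : ℝ}

/-- the `m`-th term of the ℤ-indexed series. -/
noncomputable def itm (c : ℝ) (m : ℤ) : ℝ :=
  (-1 : ℝ) ^ (m + 1) * ((m : ℝ) - 1 / 2) * Real.exp (-((2 * (m : ℝ) - 1) ^ 2 * c))

lemma itm_nat_succ (c : ℝ) (n : ℕ) : itm c ((n : ℤ) + 1) = (1 / 2) * term c n := by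
  have hsign : (-1 : ℝ) ^ ((n : ℤ) + 1 + 1) = (-1 : ℝ) ^ n := by
    have : ((n : ℤ) + 1 + 1) = ((n + 2 : ℕ) : ℤ) := by push_cast; ring
    rw [this, zpow_natCast, pow_add, neg_one_sq, mul_one]
  rw [itm, hsign, term]
  push_cast
  ring_nf

lemma itm_neg (c : ℝ) (n : ℕ) : itm c (-((n : ℤ) + 1)) = (1 / 2) * term c (n + 1) := by
  have hsign : (-1 : ℝ) ^ (-((n : ℤ) + 1) + 1) = (-1 : ℝ) ^ n * (-1 : ℝ) ^ 2 := by
    have h1 : (-((n : ℤ) + 1) + 1) = -(n : ℤ) := by ring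
    rw [h1, zpow_neg, zpow_natCast, ← inv_pow, inv_neg, inv_one, neg_one_sq, mul_one]
  rw [itm, hsign, term]
  push_cast
  ring_nf

lemma itm_zero (c : ℝ) : itm c 0 = (1 / 2) * Real.exp (-c) := by
  rw [itm]
  norm_num

lemma summable_itm_nat (hc : 0 < c) : Summable (fun n : ℕ => itm c n) := by
  rw [← summable_nat_add_iff 1]
  refine ((summable_term hc).mul_left (1/2)).congr fun n => ?_
  have : ((n + 1 : ℕ) : ℤ) = (n : ℤ) + 1 := by push_cast; ring
  rw [this, itm_nat_succ]

lemma summable_itm_neg (hc : 0 < c) : Summable (fun n : ℕ => itm c (-((n : ℤ) + 1))) := by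
  refine ((summable_term_succ hc).mul_left (1/2)).congr fun n => ?_
  rw [itm_neg]

lemma tsum_itm (hc : 0 < c) : (∑' m : ℤ, itm c m) = G c := by
  rw [tsum_of_nat_of_neg_add_one (summable_itm_nat hc) (summable_itm_neg hc)]
  have hA : (∑' n : ℕ, itm c n) = (1/2) * Real.exp (-c) + (1/2) * ∑' n : ℕ, term c n := by
    rw [(summable_itm_nat hc).tsum_eq_zero_add]
    simp only [Nat.cast_zero]
    rw [itm_zero]
    congr 1
    rw [← tsum_mul_left]
    refine tsum_congr fun n => ?_
    have : ((n + 1 : ℕ) : ℤ) = (n : ℤ) + 1 := by push_cast; ring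
    rw [this, itm_nat_succ]
  have hB : (∑' n : ℕ, itm c (-((n : ℤ) + 1))) = (1/2) * ∑' n : ℕ, term c (n + 1) := by
    rw [← tsum_mul_left]
    exact tsum_congr fun n => itm_neg c n
  have hG : G c = Real.exp (-c) + ∑' n : ℕ, term c (n + 1) := by
    rw [G, (summable_term hc).tsum_eq_zero_add, term_zero]
  have hG0 : (∑' n : ℕ, term c n) = G c := rfl
  rw [hA, hB]
  linarith [hG, hG0]

end IntSum


noncomputable def K : ℝ := ∑' n : ℕ, (2 * (n : ℝ) + 3) * Real.exp (-(4 * (n : ℝ)))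

lemma summable_K : Summable (fun n : ℕ => (2 * (n : ℝ) + 3) * Real.exp (-(4 * (n : ℝ)))) := by
  refine summable_of_poly_exp (c := 1) one_pos (A := 1) fun n => ?_
  have h : (0:ℝ) ≤ (2 * (n:ℝ) + 3) * Real.exp (-(4 * (n:ℝ))) := by positivity
  rw [Real.norm_eq_abs, abs_of_nonneg h]
  apply le_of_eq
  norm_num

lemma K_nonneg : 0 ≤ K :=
  tsum_nonneg fun n => by positivity

lemma G_tail {c : ℝ} (hc : 1 ≤ c) : |G c - Real.exp (-c)| ≤ K * Real.exp (-(9 * c)) := by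
  have hc0 : 0 < c := lt_of_lt_of_le one_pos hc
  have hGS : G c - Real.exp (-c) = ∑' n : ℕ, term c (n + 1) := by
    rw [G, (summable_term hc0).tsum_eq_zero_add, term_zero]; ring
  have hbound : ∀ n : ℕ, ‖term c (n + 1)‖ ≤
      Real.exp (-(9 * c)) * ((2 * (n : ℝ) + 3) * Real.exp (-(4 * (n : ℝ)))) := by
    intro n
    rw [term_abs]
    push_cast
    have he : Real.exp (-((2 * ((n:ℝ) + 1) + 1) ^ 2 * c)) ≤
        Real.exp (-(9 * c)) * Real.exp (-(4 * (n : ℝ))) := by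
      rw [← Real.exp_add]
      apply Real.exp_le_exp.mpr
      have hn : (0:ℝ) ≤ (n:ℝ) := Nat.cast_nonneg n
      nlinarith [mul_nonneg hn (sub_nonneg.mpr hc)]
    calc (2 * ((n:ℝ) + 1) + 1) * Real.exp (-((2 * ((n:ℝ) + 1) + 1) ^ 2 * c))
        ≤ (2 * (n:ℝ) + 3) * (Real.exp (-(9 * c)) * Real.exp (-(4 * (n : ℝ)))) := by
          apply mul_le_mul_of_nonneg_left he (by positivity) |>.trans
          apply le_of_eq; ring
      _ = Real.exp (-(9 * c)) * ((2 * (n : ℝ) + 3) * Real.exp (-(4 * (n : ℝ)))) := by ring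
  have hsn : Summable (fun n : ℕ => ‖term c (n + 1)‖) := (summable_term_succ hc0).abs
  calc |G c - Real.exp (-c)| = ‖∑' n : ℕ, term c (n + 1)‖ := by
        rw [hGS, Real.norm_eq_abs]
    _ ≤ ∑' n : ℕ, ‖term c (n + 1)‖ := norm_tsum_le_tsum_norm hsn
    _ ≤ ∑' n : ℕ, Real.exp (-(9 * c)) * ((2 * (n : ℝ) + 3) * Real.exp (-(4 * (n : ℝ)))) :=
        hsn.tsum_le_tsum hbound (summable_K.mul_left _)
    _ = K * Real.exp (-(9 * c)) := by rw [tsum_mul_left, K]; ring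

lemma G_tendsto : Tendsto (fun c : ℝ => G c * Real.exp c) atTop (nhds 1) := by
  have h0 : Tendsto (fun c : ℝ => K * Real.exp (-(8 * c))) atTop (nhds 0) := by
    have h8 : Tendsto (fun c : ℝ => 8 * c) atTop atTop :=
      Tendsto.const_mul_atTop (by norm_num) tendsto_id
    have := (Real.tendsto_exp_neg_atTop_nhds_zero.comp h8).const_mul K
    simpa using this
  have hle : ∀ᶠ c : ℝ in atTop, ‖G c * Real.exp c - 1‖ ≤ K * Real.exp (-(8 * c)) := by
    filter_upwards [eventually_ge_atTop (1 : ℝ)] with c hc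
    have h1 : G c * Real.exp c - 1 = (G c - Real.exp (-c)) * Real.exp c := by
      rw [sub_mul, ← Real.exp_add]; norm_num
    rw [h1, Real.norm_eq_abs, abs_mul, abs_of_pos (Real.exp_pos c)]
    calc |G c - Real.exp (-c)| * Real.exp c ≤ (K * Real.exp (-(9 * c))) * Real.exp c :=
          mul_le_mul_of_nonneg_right (G_tail hc) (Real.exp_pos c).le
      _ = K * Real.exp (-(8 * c)) := by rw [mul_assoc, ← Real.exp_add]; ring_nf
  have := squeeze_zero_norm' hle h0
  have h2 := this.add_const 1
  simpa using h2


lemma core_bound {c x : ℝ} (hc : 0 < c) (hx : 1 ≤ x) :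
    |x * Real.exp (-(x ^ 2 * c)) - (x + 2) * Real.exp (-((x + 2) ^ 2 * c))| ≤
      18 * Real.exp (-(x ^ 2 * (c / 2))) := by
  set a := Real.exp (-(x ^ 2 * c)) with hadef
  set y := Real.exp (-((4 * x + 4) * c)) with hydef
  have ha0 : 0 < a := Real.exp_pos _
  have hy0 : 0 < y := Real.exp_pos _
  have hy1 : y ≤ 1 := by
    rw [hydef, ← Real.exp_zero]
    exact Real.exp_le_exp.mpr (by nlinarith)
  have hy2 : 1 - y ≤ (4 * x + 4) * c := by
    have := Real.add_one_le_exp (-((4 * x + 4) * c))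
    rw [← hydef] at this
    linarith
  have hsplit : Real.exp (-((x + 2) ^ 2 * c)) = a * y := by
    rw [hadef, hydef, ← Real.exp_add]
    congr 1
    ring
  have habs : |x - (x + 2) * y| ≤ 8 * x ^ 2 * c + 2 := by
    refine abs_le.mpr ⟨by nlinarith, by nlinarith⟩
  have hfold : x * a - (x + 2) * (a * y) = a * (x - (x + 2) * y) := by ring
  rw [hsplit, hfold, abs_mul, abs_of_pos ha0]
  -- now bound a * |...| ≤ a * (8x²c+2) ≤ 18 b
  set b := Real.exp (-(x ^ 2 * (c / 2))) with hbdef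
  have hb0 : 0 < b := Real.exp_pos _
  have hb1 : b ≤ 1 := by
    rw [hbdef, ← Real.exp_zero]
    exact Real.exp_le_exp.mpr (by nlinarith)
  have hab : a = b * b := by
    rw [hadef, hbdef, ← Real.exp_add]
    congr 1
    ring
  have hE := Real.add_one_le_exp (x ^ 2 * (c / 2))
  have hbE : b * Real.exp (x ^ 2 * (c / 2)) = 1 := by
    rw [hbdef, ← Real.exp_add]
    simp
  have hv : 0 ≤ x ^ 2 * (c / 2) := by positivity
  have hvb : (x ^ 2 * (c / 2)) * b ≤ 1 - b := by
    nlinarith [mul_le_mul_of_nonneg_right hE hb0.le]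
  calc a * |x - (x + 2) * y| ≤ a * (8 * x ^ 2 * c + 2) :=
        mul_le_mul_of_nonneg_left habs ha0.le
    _ ≤ 18 * b := by nlinarith

lemma pair_eq (c : ℝ) (n : ℕ) :
    term c (2 * n) + term c (2 * n + 1) =
      (4 * (n : ℝ) + 1) * Real.exp (-((4 * (n : ℝ) + 1) ^ 2 * c)) -
      ((4 * (n : ℝ) + 1) + 2) * Real.exp (-(((4 * (n : ℝ) + 1) + 2) ^ 2 * c)) := by
  have h1 : (-1 : ℝ) ^ (2 * n) = 1 := Even.neg_one_pow ⟨n, two_mul n⟩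
  have h2 : (-1 : ℝ) ^ (2 * n + 1) = -1 := Odd.neg_one_pow ⟨n, rfl⟩
  rw [term, term, h1, h2]
  push_cast
  ring_nf

lemma pair_bound {c : ℝ} (hc : 0 < c) (n : ℕ) :
    |term c (2 * n) + term c (2 * n + 1)| ≤
      18 * Real.exp (-((4 * (n : ℝ) + 1) ^ 2 * (c / 2))) := by
  rw [pair_eq]
  refine core_bound hc ?_
  have := (Nat.cast_nonneg n : (0:ℝ) ≤ (n:ℝ))
  linarith

lemma telescope_sum {s : ℝ} (hs : 0 < s) (N : ℕ) :
    ∑ n ∈ Finset.range N, 1 / (1 + 4 * s * (n : ℝ)) ^ 2 ≤ 1 + 1 / (4 * s) := by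
  cases N with
  | zero => simp; positivity
  | succ N =>
    rw [Finset.sum_range_succ']
    have h0 : 1 / (1 + 4 * s * ((0 : ℕ) : ℝ)) ^ 2 = 1 := by norm_num
    rw [h0]
    have key : ∑ i ∈ Finset.range N, 1 / (1 + 4 * s * ((i + 1 : ℕ) : ℝ)) ^ 2 ≤ 1 / (4 * s) := by
      set F : ℕ → ℝ := fun i => (1 / (4 * s)) * (1 / (1 + 4 * s * (i : ℝ))) with hF
      have hstep : ∀ i : ℕ, 1 / (1 + 4 * s * ((i + 1 : ℕ) : ℝ)) ^ 2 ≤ F i - F (i + 1) := by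
        intro i
        have hp1 : (0:ℝ) < 1 + 4 * s * i := by positivity
        have hp2 : (0:ℝ) < 1 + 4 * s * ((i : ℝ) + 1) := by positivity
        have hkey : F i - F (i + 1) =
            1 / ((1 + 4 * s * i) * (1 + 4 * s * ((i : ℝ) + 1))) := by
          rw [hF]
          push_cast
          field_simp
          ring
        push_cast
        rw [hkey]
        apply one_div_le_one_div_of_le (by positivity)
        nlinarith
      calc ∑ i ∈ Finset.range N, 1 / (1 + 4 * s * ((i + 1 : ℕ) : ℝ)) ^ 2
          ≤ ∑ i ∈ Finset.range N, (F i - F (i + 1)) :=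
            Finset.sum_le_sum fun i _ => hstep i
        _ = F 0 - F N := Finset.sum_range_sub' F N
        _ ≤ 1 / (4 * s) := by
            have hFN : 0 ≤ F N := by rw [hF]; positivity
            have hF0 : F 0 = 1 / (4 * s) := by rw [hF]; norm_num
            linarith
    linarith

lemma G_bound {c : ℝ} (hc : 0 < c) : |G c| ≤ 36 + 9 / Real.sqrt (c / 2) := by
  set s := Real.sqrt (c / 2) with hsdef
  have hs : 0 < s := Real.sqrt_pos.mpr (by positivity)
  have hsq : s ^ 2 = c / 2 := Real.sq_sqrt (by positivity)
  have he := summable_term_even hc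
  have ho := summable_term_odd hc
  have hG : G c = ∑' n : ℕ, (term c (2 * n) + term c (2 * n + 1)) := by
    rw [G, ← tsum_even_add_odd he ho, he.tsum_add ho]
  -- termwise bound
  have hterm : ∀ n : ℕ, |term c (2 * n) + term c (2 * n + 1)| ≤
      36 * (1 / (1 + 4 * s * (n : ℝ)) ^ 2) := by
    intro n
    refine (pair_bound hc n).trans ?_
    have hn : (0:ℝ) ≤ (n : ℝ) := Nat.cast_nonneg n
    have hEexp := Real.add_one_le_exp ((4 * (n : ℝ) + 1) ^ 2 * (c / 2))
    have hexp0 : (0:ℝ) < Real.exp ((4 * (n : ℝ) + 1) ^ 2 * (c / 2)) := Real.exp_pos _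
    have hsqb : (1 + 4 * s * (n : ℝ)) ^ 2 ≤
        2 * Real.exp ((4 * (n : ℝ) + 1) ^ 2 * (c / 2)) := by
      nlinarith [sq_nonneg (4 * s * (n:ℝ) - 1), mul_nonneg hs.le hn, sq_nonneg ((n:ℝ))]
    have hp : (0:ℝ) < (1 + 4 * s * (n : ℝ)) ^ 2 := by positivity
    have hle : Real.exp (-((4 * (n : ℝ) + 1) ^ 2 * (c / 2))) ≤
        2 * (1 / (1 + 4 * s * (n : ℝ)) ^ 2) := by
      have h2 : 2 * (1 / (1 + 4 * s * (n : ℝ)) ^ 2) = 2 / (1 + 4 * s * (n : ℝ)) ^ 2 := by ring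
      rw [Real.exp_neg, inv_eq_one_div, h2, div_le_div_iff₀ hexp0 hp]
      nlinarith
    linarith
  have hsum : Summable (fun n : ℕ => |term c (2 * n) + term c (2 * n + 1)|) :=
    (he.add ho).abs
  have habs : |G c| ≤ ∑' n : ℕ, |term c (2 * n) + term c (2 * n + 1)| := by
    rw [hG, ← Real.norm_eq_abs]
    refine (norm_tsum_le_tsum_norm ?_).trans (le_of_eq ?_)
    · simpa [Real.norm_eq_abs] using hsum
    · simp [Real.norm_eq_abs]
  have htsum : (∑' n : ℕ, |term c (2 * n) + term c (2 * n + 1)|) ≤ 36 + 9 / s := by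
    apply Real.tsum_le_of_sum_range_le (fun n => abs_nonneg _)
    intro N
    calc ∑ n ∈ Finset.range N, |term c (2 * n) + term c (2 * n + 1)|
        ≤ ∑ n ∈ Finset.range N, 36 * (1 / (1 + 4 * s * (n : ℝ)) ^ 2) :=
          Finset.sum_le_sum fun n _ => hterm n
      _ = 36 * ∑ n ∈ Finset.range N, 1 / (1 + 4 * s * (n : ℝ)) ^ 2 := by
          rw [Finset.mul_sum]
      _ ≤ 36 * (1 + 1 / (4 * s)) :=
          mul_le_mul_of_nonneg_left (telescope_sum hs N) (by norm_num)
      _ = 36 + 9 / s := by field_simp; ring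
  linarith


lemma continuousOn_G : ContinuousOn G (Set.Ioi 0) := by
  intro c₀ hc₀
  have hc₀' : (0:ℝ) < c₀ := hc₀
  have hc2 : 0 < c₀ / 2 := half_pos hc₀'
  have hcont : ContinuousOn G (Set.Ici (c₀ / 2)) := by
    show ContinuousOn (fun c => ∑' k : ℕ, term c k) (Set.Ici (c₀ / 2))
    apply continuousOn_tsum (f := fun (k : ℕ) (c : ℝ) => term c k)
      (u := fun (k : ℕ) => 3 * ((2 * (k:ℝ) + 3) * Real.exp (-(4 * (c₀ / 2) * k))))
    · intro i
      apply Continuous.continuousOn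
      unfold term
      fun_prop
    · refine summable_of_poly_exp hc2 (A := 3) fun n => ?_
      have h : (0:ℝ) ≤ 3 * ((2 * (n:ℝ) + 3) * Real.exp (-(4 * (c₀/2) * n))) := by positivity
      rw [Real.norm_eq_abs, abs_of_nonneg h]
    · intro n x hx
      refine (norm_term_le (lt_of_lt_of_le hc2 hx) le_rfl (by omega)).trans ?_
      have : Real.exp (-(4 * x * n)) ≤ Real.exp (-(4 * (c₀/2) * n)) := by
        apply Real.exp_le_exp.mpr
        have hn : (0:ℝ) ≤ (n:ℝ) := Nat.cast_nonneg n
        have : c₀ / 2 ≤ x := hx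
        nlinarith
      have hn3 : (0:ℝ) ≤ 2 * (n:ℝ) + 3 := by positivity
      nlinarith
  exact (hcont.continuousAt (Ici_mem_nhds (by linarith))).continuousWithinAt

end Stmt16Aux

end

open Stmt16Aux

/-- Large-`r` asymptotics of `p_R` and integrability of `r ↦ r p_R(r)`. -/
theorem stmt16 (T : ℝ) (hT : 0 < T)
    (pR : ℝ → ℝ)
    (hpR : ∀ r : ℝ, 0 < r → pR r = 2 * Real.sqrt (2 / (π * T)) *
      ∑' m : ℤ, (-1 : ℝ) ^ (m + 1) * ((m : ℝ) - 1 / 2) *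
        Real.exp (-(((m : ℝ) - 1 / 2) ^ 2 * 2 * r ^ 2 / T))) :
    Tendsto (fun r : ℝ =>
        pR r / (2 * Real.sqrt (2 / (π * T)) * Real.exp (-(r ^ 2 / (2 * T)))))
      atTop (nhds 1) ∧
    IntegrableOn (fun r : ℝ => r * pR r) (Set.Ioi 0) := by
  have hπT : (0:ℝ) < 2 / (π * T) := by positivity
  set C : ℝ := 2 * Real.sqrt (2 / (π * T)) with hCdef
  have hC : 0 < C := by
    rw [hCdef]; positivity
  -- key representation
  have key : ∀ r : ℝ, 0 < r → pR r = C * G (r ^ 2 / (2 * T)) := by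
    intro r hr
    rw [hpR r hr]
    congr 1
    have hc : 0 < r ^ 2 / (2 * T) := by positivity
    rw [← tsum_itm hc]
    refine tsum_congr fun m => ?_
    rw [itm]
    congr 2
    rw [neg_inj]
    field_simp
  constructor
  · -- Tendsto part
    have hev : (fun r : ℝ => pR r / (C * Real.exp (-(r ^ 2 / (2 * T))))) =ᶠ[atTop]
        (fun r : ℝ => G (r ^ 2 / (2 * T)) * Real.exp (r ^ 2 / (2 * T))) := by
      filter_upwards [eventually_gt_atTop (0:ℝ)] with r hr
      rw [key r hr, mul_div_mul_left _ _ (ne_of_gt hC), Real.exp_neg]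
      field_simp
    have hcomp : Tendsto (fun r : ℝ => r ^ 2 / (2 * T)) atTop atTop :=
      (tendsto_pow_atTop two_ne_zero).atTop_div_const (by positivity)
    have h1 : Tendsto (fun r : ℝ => G (r ^ 2 / (2 * T)) * Real.exp (r ^ 2 / (2 * T)))
        atTop (nhds 1) := G_tendsto.comp hcomp
    exact h1.congr' hev.symm
  · -- Integrability
    set F : ℝ → ℝ := fun r => r * (C * G (r ^ 2 / (2 * T))) with hF
    have hEq : Set.EqOn F (fun r => r * pR r) (Set.Ioi 0) := by
      intro r hr
      simp only [hF]
      rw [key r hr]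
    have hcontF : ContinuousOn F (Set.Ioi 0) := by
      apply ContinuousOn.mul continuousOn_id
      apply ContinuousOn.mul continuousOn_const
      refine ContinuousOn.comp (g := G) (f := fun r : ℝ => r ^ 2 / (2 * T))
        (t := Set.Ioi 0) continuousOn_G
        (((continuous_pow 2).div_const (2 * T)).continuousOn) ?_
      intro r hr
      have : (0:ℝ) < r := hr
      exact Set.mem_Ioi.mpr (by positivity)
    have hbound : ∀ r : ℝ, 0 < r → |F r| ≤ C * (36 * r + 18 * Real.sqrt T) := by
      intro r hr
      have hc : 0 < r ^ 2 / (2 * T) := by positivity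
      have hsT : 0 < Real.sqrt T := Real.sqrt_pos.mpr hT
      have hsqrt : Real.sqrt ((r ^ 2 / (2 * T)) / 2) = r / (2 * Real.sqrt T) := by
        rw [show (r ^ 2 / (2 * T)) / 2 = (r / (2 * Real.sqrt T)) ^ 2 by
          rw [div_pow, mul_pow, Real.sq_sqrt hT.le]; ring]
        exact Real.sqrt_sq (by positivity)
      have hGb := G_bound hc
      have h9 : 9 / Real.sqrt ((r ^ 2 / (2 * T)) / 2) = 18 * Real.sqrt T / r := by
        rw [hsqrt]
        field_simp
        all_goals ring
      rw [h9] at hGb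
      have : |F r| = r * (C * |G (r ^ 2 / (2 * T))|) := by
        rw [hF]
        simp only
        rw [abs_mul, abs_mul, abs_of_pos hr, abs_of_pos hC]
      rw [this]
      have h2 : r * (C * |G (r ^ 2 / (2 * T))|) ≤ r * (C * (36 + 18 * Real.sqrt T / r)) := by
        gcongr
      refine h2.trans (le_of_eq ?_)
      field_simp
      all_goals ring
    set R₀ : ℝ := Real.sqrt (2 * T) + 1 with hR₀def
    have hR₀ : 0 < R₀ := by positivity
    have hunion : Set.Ioc (0:ℝ) R₀ ∪ Set.Ioi R₀ = Set.Ioi 0 :=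
      Set.Ioc_union_Ioi_eq_Ioi hR₀.le
    have hI1 : IntegrableOn F (Set.Ioc 0 R₀) := by
      have hmeas : AEStronglyMeasurable F (volume.restrict (Set.Ioc 0 R₀)) :=
        (hcontF.mono Set.Ioc_subset_Ioi_self).aestronglyMeasurable measurableSet_Ioc
      refine Integrable.mono' (g := fun _ => C * (36 * R₀ + 18 * Real.sqrt T))
        (integrableOn_const measure_Ioc_lt_top.ne) hmeas ?_
      rw [ae_restrict_iff' measurableSet_Ioc]
      filter_upwards with r hr
      rw [Real.norm_eq_abs]
      refine (hbound r hr.1).trans ?_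
      have h1 : r ≤ R₀ := hr.2
      nlinarith [Real.sqrt_nonneg T]
    have hI2 : IntegrableOn F (Set.Ioi R₀) := by
      have hmeas : AEStronglyMeasurable F (volume.restrict (Set.Ioi R₀)) :=
        (hcontF.mono (Set.Ioi_subset_Ioi hR₀.le)).aestronglyMeasurable measurableSet_Ioi
      refine Integrable.mono'
        (g := fun r => (C * (K + 1)) * (r * Real.exp (-(1 / (2 * T)) * r ^ 2)))
        (((integrable_mul_exp_neg_mul_sq (by positivity : (0:ℝ) < 1 / (2 * T))).const_mul
          _).integrableOn) hmeas ?_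
      rw [ae_restrict_iff' measurableSet_Ioi]
      filter_upwards with r hr
      have hrpos : 0 < r := lt_trans hR₀ hr
      have hc1 : 1 ≤ r ^ 2 / (2 * T) := by
        rw [le_div_iff₀ (by positivity)]
        have hs := Real.sq_sqrt (show (0:ℝ) ≤ 2 * T by positivity)
        have hs0 := Real.sqrt_nonneg (2 * T)
        have : Real.sqrt (2 * T) + 1 < r := hr
        nlinarith
      have hc0 : 0 < r ^ 2 / (2 * T) := by positivity
      set c : ℝ := r ^ 2 / (2 * T) with hcd
      have hGb : |G c| ≤ (K + 1) * Real.exp (-c) := by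
        have h1 := G_tail hc1
        have h2 : Real.exp (-(9 * c)) ≤ Real.exp (-c) := Real.exp_le_exp.mpr (by linarith)
        have h3 : |G c| ≤ |G c - Real.exp (-c)| + Real.exp (-c) := by
          have := abs_add_le (G c - Real.exp (-c)) (Real.exp (-c))
          simpa [abs_of_pos (Real.exp_pos (-c))] using this
        have h4 : K * Real.exp (-(9 * c)) ≤ K * Real.exp (-c) :=
          mul_le_mul_of_nonneg_left h2 K_nonneg
        nlinarith
      rw [Real.norm_eq_abs]
      have hFr : |F r| = r * (C * |G c|) := by
        rw [hF]
        simp only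
        rw [abs_mul, abs_mul, abs_of_pos hrpos, abs_of_pos hC, hcd]
      rw [hFr]
      have hee : Real.exp (-(1 / (2 * T)) * r ^ 2) = Real.exp (-c) := by
        rw [hcd]
        congr 1
        field_simp
      rw [hee]
      calc r * (C * |G c|) ≤ r * (C * ((K + 1) * Real.exp (-c))) := by gcongr
        _ = C * (K + 1) * (r * Real.exp (-c)) := by ring
    have hIF : IntegrableOn F (Set.Ioi 0) := hunion ▸ hI1.union hI2
    exact hIF.congr_fun hEq measurableSet_Ioi
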